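/- Let T be a tree with radius r, diameter d, and eccentric sequence (r^(m_r),(r+1)^(m_{r+1}),...,d^(m_d)), where m_i is the number of vertices of eccentricity i. If m_i > m_{i-1} + m_{i+1} for some r < i ≤ d (setting m_{d+1} = 0), then F(T) ≥ m_i − m_{i−1} − m_{i+1}. -/

import Mathlib

open SimpleGraph

/-- A set `S` of vertices is a fixing set of `G` if the only automorphism of `G`
fixing every vertex of `S` is the identity. -/
def IsFixingSet {V : Type*} (G : SimpleGraph V) (S : Set V) : Prop :=
  ∀ φ : G ≃g G, (∀ v ∈ S, φ v = v) → ∀ v, φ v = v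

/-- The fixing number of a finite graph: the minimum cardinality of a fixing set. -/
noncomputable def fixingNumber {V : Type*} [Fintype V] (G : SimpleGraph V) : ℕ :=
  sInf {n | ∃ S : Finset V, S.card = n ∧ IsFixingSet G ↑S}

/-- A coloring is distinguishing if the only color-preserving automorphism is the identity. -/
def IsDistinguishingColoring {V α : Type*} (G : SimpleGraph V) (c : V → α) : Prop :=
  ∀ φ : G ≃g G, (∀ v, c (φ v) = c v) → ∀ v, φ v = v

/-- `G` is `D`-distinguishable if it has a distinguishing coloring with at most `D` colors. -/
def Distinguishable {V : Type*} (G : SimpleGraph V) (D : ℕ) : Prop :=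
  ∃ c : V → Fin D, IsDistinguishingColoring G c

/-- The distinguishing number of `G`. -/
noncomputable def distinguishingNumber {V : Type*} (G : SimpleGraph V) : ℕ :=
  sInf {D | Distinguishable G D}

/-- Eccentricity of a vertex: the supremum of distances to other vertices. -/
noncomputable def ecc {V : Type*} (G : SimpleGraph V) (v : V) : ℕ :=
  sSup (Set.range (G.dist v))

section Aux

variable {V : Type*} {G : SimpleGraph V}

lemma exists_ecc [Fintype V] (G : SimpleGraph V) (v : V) : ∃ x, G.dist v x = ecc G v := by
  have hne : (Set.range (G.dist v)).Nonempty := ⟨G.dist v v, v, rfl⟩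
  exact Nat.sSup_mem hne (Set.finite_range _).bddAbove

lemma dist_le_ecc [Fintype V] (G : SimpleGraph V) (v x : V) : G.dist v x ≤ ecc G v :=
  le_csSup (Set.finite_range _).bddAbove ⟨x, rfl⟩

lemma path_length_eq_dist (hT : G.IsTree) {u v : V} (p : G.Walk u v) (hp : p.IsPath) :
    p.length = G.dist u v := by
  obtain ⟨q, hq⟩ := hT.isConnected.exists_walk_length_eq_dist u v
  have hqp : q.IsPath := q.isPath_of_length_eq_dist hq
  have hpq : p = q := by
    simpa using congrArg Subtype.val (hT.IsAcyclic.path_unique ⟨p, hp⟩ ⟨q, hqp⟩)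
  rw [hpq, hq]

lemma dist_add_dist_le {a b z : V} (p : G.Walk a b) (hz : z ∈ p.support) :
    G.dist a z + G.dist z b ≤ p.length := by
  classical
  have h := congrArg Walk.length (p.take_spec hz)
  rw [Walk.length_append] at h
  have h1 := dist_le (p.takeUntil z hz)
  have h2 := dist_le (p.dropUntil z hz)
  omega

lemma key_unique (hT : G.IsTree) {w u u' x : V} (h1 : G.Adj w u) (h2 : G.Adj w u')
    (hne : u ≠ u') (d1 : G.dist u x ≤ G.dist w x) (d2 : G.dist u' x ≤ G.dist w x) :
    False := by
  have main : ∀ y : V, G.Adj w y → G.dist y x ≤ G.dist w x →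
      ∃ q : G.Walk y x, q.IsPath ∧ w ∉ q.support := by
    intro y hy hd
    obtain ⟨q, hq⟩ := hT.isConnected.exists_walk_length_eq_dist y x
    refine ⟨q, q.isPath_of_length_eq_dist hq, fun hw => ?_⟩
    have hle := dist_add_dist_le q hw
    have hyw : G.dist y w = 1 := by rw [dist_eq_one_iff_adj]; exact hy.symm
    omega
  obtain ⟨q1, hq1, hw1⟩ := main u h1 d1
  obtain ⟨q2, hq2, hw2⟩ := main u' h2 d2
  have heq : (Walk.cons h1 q1 : G.Walk w x) = Walk.cons h2 q2 := by
    simpa using congrArg Subtype.val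
      (hT.IsAcyclic.path_unique ⟨Walk.cons h1 q1, hq1.cons hw1⟩ ⟨Walk.cons h2 q2, hq2.cons hw2⟩)
  have hsup := congrArg Walk.support heq
  rw [Walk.support_cons, Walk.support_cons, q1.support_eq_cons, q2.support_eq_cons] at hsup
  simp only [List.cons.injEq] at hsup
  exact hne hsup.2.1

lemma ecc_le_ecc_add_one [Fintype V] (hc : G.Connected) {u v : V} (h : G.Adj u v) :
    ecc G u ≤ ecc G v + 1 := by
  obtain ⟨x, hx⟩ := exists_ecc G u
  have h1 := hc.dist_triangle (u := u) (v := v) (w := x)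
  have h2 : G.dist u v = 1 := by rwa [dist_eq_one_iff_adj]
  have h3 := dist_le_ecc G v x
  omega

lemma neighbor_step (hT : G.IsTree) {v u x : V} (huv : G.Adj v u)
    (hpos : 0 < G.dist v x) (hd : G.dist u x ≤ G.dist v x) :
    ∃ q : G.Walk u x, q.IsPath ∧ v ∉ q.support ∧ q.length + 1 = G.dist v x := by
  obtain ⟨p, hp⟩ := hT.isConnected.exists_walk_length_eq_dist v x
  have hpath := p.isPath_of_length_eq_dist hp
  cases p with
  | nil => simp at hp; simp [SimpleGraph.dist_self] at hpos
  | @cons _ y _ h q =>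
    rw [Walk.length_cons] at hp
    have hyx : G.dist y x ≤ q.length := dist_le q
    have huy : u = y := by
      by_contra hne
      exact key_unique hT huv h hne hd (by omega)
    subst huy
    rw [Walk.cons_isPath_iff] at hpath
    exact ⟨q, hpath.1, hpath.2, hp⟩

lemma no_adj_ecc_eq [Fintype V] (hT : G.IsTree) {u v c : V} (huv : G.Adj u v)
    (he : ecc G u = ecc G v) (hcc : ecc G c < ecc G v) : False := by
  obtain ⟨x, hx⟩ := exists_ecc G v
  obtain ⟨x', hx'⟩ := exists_ecc G u
  have hkpos : 0 < ecc G v := lt_of_le_of_lt (Nat.zero_le _) hcc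
  have hd1 : G.dist u x ≤ G.dist v x := by
    rw [hx, ← he]; exact dist_le_ecc G u x
  have hd2 : G.dist v x' ≤ G.dist u x' := by
    rw [hx', he]; exact dist_le_ecc G v x'
  obtain ⟨q, hq, hvq, hlen⟩ := neighbor_step hT huv.symm (by omega) hd1
  obtain ⟨q', hq', huq', hlen'⟩ := neighbor_step hT huv (by rw [hx']; omega) hd2
  -- build the path x → u → v → x'
  have hr : ((q.reverse.append (Walk.cons huv q')) : G.Walk x x').IsPath := by
    rw [Walk.isPath_def, Walk.support_append, Walk.support_cons, List.tail_cons,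
      Walk.support_reverse]
    refine List.Nodup.append (List.nodup_reverse.mpr hq.support_nodup) hq'.support_nodup ?_
    intro z hz1 hz2
    rw [List.mem_reverse] at hz1
    have a1 := dist_add_dist_le q hz1
    have a2 := dist_add_dist_le q' hz2
    have t1 := hT.isConnected.dist_triangle (u := v) (v := z) (w := x)
    have t2 := hT.isConnected.dist_triangle (u := u) (v := z) (w := x')
    omega
  have hrl := path_length_eq_dist hT _ hr
  rw [Walk.length_append, Walk.length_cons, Walk.length_reverse] at hrl
  have t3 := hT.isConnected.dist_triangle (u := x) (v := c) (w := x')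
  have b1 : G.dist x c ≤ ecc G c := by rw [dist_comm]; exact dist_le_ecc G c x
  have b2 : G.dist c x' ≤ ecc G c := dist_le_ecc G c x'
  omega

lemma swap_automorphism {u v : V} (hne : u ≠ v) (hnb : ∀ z, G.Adj u z ↔ G.Adj v z) :
    ∃ φ : G ≃g G, φ u = v ∧ ∀ z, z ≠ u → z ≠ v → φ z = z := by
  classical
  have hnadj : ¬ G.Adj u v := fun hadj => G.irrefl ((hnb v).mp hadj)
  have hdir : ∀ a b, G.Adj a b → G.Adj (Equiv.swap u v a) (Equiv.swap u v b) := by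
    intro a b hab
    rcases eq_or_ne a u with h' | hau
    · rw [h'] at hab ⊢
      have hbu : b ≠ u := fun e => G.irrefl (e ▸ hab)
      have hbv : b ≠ v := fun e => hnadj (e ▸ hab)
      rw [Equiv.swap_apply_left, Equiv.swap_apply_of_ne_of_ne hbu hbv]
      exact (hnb b).mp hab
    rcases eq_or_ne a v with h' | hav
    · rw [h'] at hab ⊢
      have hbv : b ≠ v := fun e => G.irrefl (e ▸ hab)
      have hbu : b ≠ u := fun e => hnadj (e ▸ hab).symm
      rw [Equiv.swap_apply_right, Equiv.swap_apply_of_ne_of_ne hbu hbv]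
      exact (hnb b).mpr hab
    rw [Equiv.swap_apply_of_ne_of_ne hau hav]
    rcases eq_or_ne b u with h' | hbu
    · rw [h'] at hab ⊢
      rw [Equiv.swap_apply_left]
      exact ((hnb a).mp hab.symm).symm
    rcases eq_or_ne b v with h' | hbv
    · rw [h'] at hab ⊢
      rw [Equiv.swap_apply_right]
      exact ((hnb a).mpr hab.symm).symm
    rw [Equiv.swap_apply_of_ne_of_ne hbu hbv]
    exact hab
  have hiff : ∀ a b, G.Adj (Equiv.swap u v a) (Equiv.swap u v b) ↔ G.Adj a b := by
    intro a b
    constructor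
    · intro hab; simpa using hdir _ _ hab
    · exact hdir a b
  exact ⟨⟨Equiv.swap u v, hiff _ _⟩, Equiv.swap_apply_left u v,
    fun z h1 h2 => Equiv.swap_apply_of_ne_of_ne h1 h2⟩

end Aux

theorem fixingNumber_ge_of_eccentric_sequence
    {V : Type*} [Fintype V] (G : SimpleGraph V) (hT : G.IsTree) (i : ℕ)
    (hri : sInf (Set.range (ecc G)) < i) (hid : i ≤ sSup (Set.range (ecc G)))
    (h : {v : V | ecc G v = i - 1}.ncard + {v : V | ecc G v = i + 1}.ncard
        < {v : V | ecc G v = i}.ncard) :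
    {v : V | ecc G v = i}.ncard - {v : V | ecc G v = i - 1}.ncard
        - {v : V | ecc G v = i + 1}.ncard ≤ fixingNumber G := by
  classical
  have hconn := hT.isConnected
  set A := {v : V | ecc G v = i} with hA
  set B := {v : V | ecc G v = i - 1} with hB
  set C := {v : V | ecc G v = i + 1} with hC
  have hApos : 0 < A.ncard := lt_of_le_of_lt (Nat.zero_le _) h
  have hAne : A.Nonempty := by
    rw [← Set.ncard_pos (Set.toFinite _)]; exact hApos
  obtain ⟨v0, hv0⟩ := hAne
  have : Nonempty V := ⟨v0⟩
  obtain ⟨c, hc⟩ := Nat.sInf_mem (Set.range_nonempty (ecc G))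
  have hci : ecc G c < i := by rw [hc]; exact hri
  have hi1 : 1 ≤ i := by omega
  set L := {v : V | ecc G v = i ∧ ∀ u, G.Adj v u → ecc G u ≤ i} with hL
  -- every vertex of A \ L has a neighbor of eccentricity i+1
  have hALnb : ∀ v ∈ A \ L, ∃ u, G.Adj v u ∧ ecc G u = i + 1 := by
    rintro v ⟨hvA, hvL⟩
    rw [hA, Set.mem_setOf_eq] at hvA
    rw [hL, Set.mem_setOf_eq, not_and] at hvL
    push_neg at hvL
    obtain ⟨u, hu, hue⟩ := hvL hvA
    refine ⟨u, hu, le_antisymm ?_ hue⟩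
    have := ecc_le_ecc_add_one hconn hu.symm
    omega
  -- A \ L injects into C
  have hALC : (A \ L).ncard ≤ C.ncard := by
    set f : V → V := fun v =>
      if hv : ∃ u, G.Adj v u ∧ ecc G u = i + 1 then hv.choose else v with hf
    have hfspec : ∀ v ∈ A \ L, G.Adj v (f v) ∧ ecc G (f v) = i + 1 := by
      intro v hv
      have hex := hALnb v hv
      rw [hf]; simp only [hex, dif_pos]
      exact hex.choose_spec
    have hmaps : ∀ v ∈ A \ L, f v ∈ C := fun v hv => (hfspec v hv).2
    have hinj : Set.InjOn f (A \ L) := by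
      intro v1 hv1 v2 hv2 hfe
      by_contra hne
      obtain ⟨ha1, he1⟩ := hfspec v1 hv1
      obtain ⟨ha2, he2⟩ := hfspec v2 hv2
      obtain ⟨x, hx⟩ := exists_ecc G (f v1)
      have hd1 : G.dist v1 x ≤ G.dist (f v1) x := by
        rw [hx, he1]
        have := dist_le_ecc G v1 x
        have : ecc G v1 = i := hv1.1
        omega
      have hd2 : G.dist v2 x ≤ G.dist (f v1) x := by
        rw [hx, he1]
        have := dist_le_ecc G v2 x
        have : ecc G v2 = i := hv2.1
        omega
      exact key_unique hT ha1.symm (hfe ▸ ha2.symm) hne hd1 hd2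
    calc (A \ L).ncard = (f '' (A \ L)).ncard := (Set.ncard_image_of_injOn hinj).symm
      _ ≤ C.ncard := Set.ncard_le_ncard (Set.image_subset_iff.mpr hmaps) (Set.toFinite _)
  have hALcard : A.ncard ≤ L.ncard + C.ncard := by
    have hsub : A ⊆ L ∪ (A \ L) := by
      intro a ha
      by_cases hLa : a ∈ L
      · exact Or.inl hLa
      · exact Or.inr ⟨ha, hLa⟩
    calc A.ncard ≤ (L ∪ (A \ L)).ncard := Set.ncard_le_ncard hsub (Set.toFinite _)
      _ ≤ L.ncard + (A \ L).ncard := Set.ncard_union_le _ _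
      _ ≤ L.ncard + C.ncard := by omega
  -- every vertex of L has a unique neighbor, of eccentricity i - 1
  have hLun : ∀ v ∈ L, ∃ w, G.Adj v w ∧ (∀ z, G.Adj v z → z = w) ∧ ecc G w = i - 1 := by
    rintro v ⟨hvi, hvle⟩
    obtain ⟨x, hx⟩ := exists_ecc G v
    have hpos : 0 < G.dist v x := by rw [hx, hvi]; omega
    obtain ⟨p, hp⟩ := hconn.exists_walk_length_eq_dist v x
    cases p with
    | nil => rw [← hp] at hpos; simp at hpos
    | @cons _ y _ hadj q =>
      have huniq : ∀ z, G.Adj v z → z = y := by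
        intro z hz
        by_contra hne
        have hdz : G.dist z x ≤ G.dist v x := by
          rw [hx, hvi]
          have := dist_le_ecc G z x
          have := hvle z hz
          omega
        have hdy : G.dist y x ≤ G.dist v x := by
          rw [hx, hvi]
          have := dist_le_ecc G y x
          have := hvle y hadj
          omega
        exact key_unique hT hz hadj hne hdz hdy
      refine ⟨y, hadj, huniq, ?_⟩
      have h1 : ecc G y ≤ i := hvle y hadj
      have h2 : ecc G v ≤ ecc G y + 1 := ecc_le_ecc_add_one hconn hadj
      have h3 : ecc G y ≠ i := by
        intro he
        exact no_adj_ecc_eq (c := c) hT hadj.symm (by rw [he, hvi]) (by rw [hvi]; exact hci)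
      omega
  -- now the fixing set argument
  have hnonempty : {n | ∃ S : Finset V, S.card = n ∧ IsFixingSet G ↑S}.Nonempty :=
    ⟨Fintype.card V, Finset.univ, by simp, fun φ hφ v => hφ v (by simp)⟩
  rw [fixingNumber]
  apply le_csInf hnonempty
  rintro n ⟨S, rfl, hS⟩
  -- L \ S injects into B
  have hLSB : (L \ ↑S).ncard ≤ B.ncard := by
    set g : V → V := fun v => if hv : ∃ w, G.Adj v w then hv.choose else v with hg
    have hgspec : ∀ v ∈ L, G.Adj v (g v) ∧ (∀ z, G.Adj v z → z = g v) ∧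
        ecc G (g v) = i - 1 := by
      intro v hv
      obtain ⟨w, hw, huniq, hwe⟩ := hLun v hv
      have hex : ∃ w, G.Adj v w := ⟨w, hw⟩
      have hgv : g v = w := by
        rw [hg]; simp only [hex, dif_pos]
        exact huniq _ hex.choose_spec
      rw [hgv]
      exact ⟨hw, huniq, hwe⟩
    have hmaps : ∀ v ∈ L \ ↑S, g v ∈ B := fun v hv => (hgspec v hv.1).2.2
    have hinj : Set.InjOn g (L \ ↑S) := by
      intro v1 hv1 v2 hv2 hge
      by_contra hne
      obtain ⟨ha1, hu1, _⟩ := hgspec v1 hv1.1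
      obtain ⟨ha2, hu2, _⟩ := hgspec v2 hv2.1
      have hnb : ∀ z, G.Adj v1 z ↔ G.Adj v2 z := by
        intro z
        constructor
        · intro hz; rw [hu1 z hz, hge]; exact ha2
        · intro hz; rw [hu2 z hz, ← hge]; exact ha1
      obtain ⟨φ, hφu, hφfix⟩ := swap_automorphism hne hnb
      have hfixS : ∀ s ∈ (↑S : Set V), φ s = s := by
        intro s hs
        refine hφfix s (fun e => hv1.2 (e ▸ hs)) (fun e => hv2.2 (e ▸ hs))
      have := hS φ hfixS v1
      rw [hφu] at this
      exact hne this.symm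
    calc (L \ ↑S).ncard = (g '' (L \ ↑S)).ncard := (Set.ncard_image_of_injOn hinj).symm
      _ ≤ B.ncard := Set.ncard_le_ncard (Set.image_subset_iff.mpr hmaps) (Set.toFinite _)
  have hLsplit : L.ncard ≤ (L ∩ ↑S).ncard + B.ncard := by
    have hsub : L ⊆ (L ∩ ↑S) ∪ (L \ ↑S) := by
      intro a ha
      by_cases hs : a ∈ (↑S : Set V)
      · exact Or.inl ⟨ha, hs⟩
      · exact Or.inr ⟨ha, hs⟩
    calc L.ncard ≤ ((L ∩ ↑S) ∪ (L \ ↑S)).ncard := Set.ncard_le_ncard hsub (Set.toFinite _)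
      _ ≤ (L ∩ ↑S).ncard + (L \ ↑S).ncard := Set.ncard_union_le _ _
      _ ≤ (L ∩ ↑S).ncard + B.ncard := by omega
  have hfin : (L ∩ ↑S).ncard ≤ S.card := by
    rw [← Set.ncard_coe_finset]
    exact Set.ncard_le_ncard Set.inter_subset_right (Set.toFinite _)
  omega
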